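/- For every λ > 0 and δ ∈ (0,1), P( for all t ∈ ℝ with F(t) > 0: F̂ₙ(t) − F(t) ≤ Δ_{ε(n,δ)}(F(t), λ) ) ≥ 1 − δ. -/

import Mathlib

open MeasureTheory ProbabilityTheory Real

/-- `Δ_ε(r, λ) = (log(1+λ) + ε)/log(1 + λ/r) - r`. -/
noncomputable def DeltaEps (ε r lam : ℝ) : ℝ :=
  (Real.log (1 + lam) + ε) / Real.log (1 + lam / r) - r


lemma cofinal_seq (B : Set ℝ) (hB : B.Nonempty) :
    ∃ v : ℕ → ℝ, (∀ m, v m ∈ B) ∧ ∀ u ∈ B, ∃ m, u ≤ v m := by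
  by_cases hbdd : BddAbove B
  · set s := sSup B with hs0
    by_cases hs : s ∈ B
    · exact ⟨fun _ => s, fun _ => hs, fun u hu => ⟨0, le_csSup hbdd hu⟩⟩
    · have h : ∀ m : ℕ, ∃ u ∈ B, s - 1/(m+1) < u := by
        intro m
        apply exists_lt_of_lt_csSup hB
        have : 0 < 1/((m:ℝ)+1) := by positivity
        linarith
      choose v hv1 hv2 using h
      refine ⟨v, hv1, ?_⟩
      intro u hu
      have hus : u < s := lt_of_le_of_ne (le_csSup hbdd hu) (fun h => hs (h ▸ hu))
      obtain ⟨m, hm⟩ := exists_nat_one_div_lt (sub_pos.mpr hus)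
      refine ⟨m, le_of_lt ?_⟩
      have := hv2 m
      linarith
  · have h : ∀ m : ℕ, ∃ u ∈ B, (m:ℝ) < u := by
      intro m
      rcases not_bddAbove_iff.mp hbdd (m:ℝ) with ⟨u, hu, hlt⟩
      exact ⟨u, hu, hlt⟩
    choose v hv1 hv2 using h
    refine ⟨v, hv1, ?_⟩
    intro u hu
    exact ⟨Nat.ceil u, le_of_lt (lt_of_le_of_lt (Nat.le_ceil u) (hv2 _))⟩

lemma lower_meas (μ : Measure ℝ) (B : Set ℝ) (c : ENNReal)
    (hB : ∀ u ∈ B, μ (Set.Iic u) ≤ c) :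
    MeasurableSet {x : ℝ | ∃ u ∈ B, x ≤ u} ∧ μ {x : ℝ | ∃ u ∈ B, x ≤ u} ≤ c := by
  rcases Set.eq_empty_or_nonempty B with hB0 | hB0
  · constructor
    · convert MeasurableSet.empty
      simp [hB0]
    · have : {x : ℝ | ∃ u ∈ B, x ≤ u} = ∅ := by simp [hB0]
      rw [this]
      simp
  · obtain ⟨v, hv1, hv2⟩ := cofinal_seq B hB0
    have hset : {x : ℝ | ∃ u ∈ B, x ≤ u} = ⋃ m, Set.Iic (v m) := by
      ext x
      simp only [Set.mem_setOf_eq, Set.mem_iUnion, Set.mem_Iic]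
      constructor
      · rintro ⟨u, hu, hxu⟩
        obtain ⟨m, hm⟩ := hv2 u hu
        exact ⟨m, le_trans hxu hm⟩
      · rintro ⟨m, hm⟩
        exact ⟨v m, hv1 m, hm⟩
    rw [hset]
    constructor
    · exact MeasurableSet.iUnion (fun m => measurableSet_Iic)
    · have hdir : Directed (· ⊆ ·) (fun m => Set.Iic (v m)) := by
        intro a b
        rcases le_total (v a) (v b) with h | h
        exacts [⟨b, Set.Iic_subset_Iic.mpr h, subset_rfl⟩, ⟨a, subset_rfl, Set.Iic_subset_Iic.mpr h⟩]
      rw [hdir.measure_iUnion]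
      exact iSup_le fun m => hB _ (hv1 m)



open Finset

section Core
variable {n : ℕ}

lemma core_aux_key (q : Fin (n+1) → ℝ) (k : ℕ) (hk : k < n + 1) (c : ℝ) :
    (∑ j : Fin (n+1), if (j : ℕ) ≤ k then q j * c ^ (if (j : ℕ) < k then 1 else 0) else 0)
      = c * (∑ j : Fin (n+1), if (j : ℕ) < k then q j else 0) + q ⟨k, hk⟩ := by
  have h : ∀ j : Fin (n+1),
      (if (j : ℕ) ≤ k then q j * c ^ (if (j : ℕ) < k then 1 else 0) else 0)
        = (if (j : ℕ) < k then c * q j else 0) + (if j = (⟨k, hk⟩ : Fin (n+1)) then q j else 0) := by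
    intro j
    rcases lt_trichotomy (j : ℕ) k with hj | hj | hj
    · have hne : j ≠ (⟨k, hk⟩ : Fin (n+1)) := by
        intro h; apply absurd hj; simp [h]
      simp [hj, hj.le, hne, mul_comm]
    · have hje : j = (⟨k, hk⟩ : Fin (n+1)) := by
        apply Fin.ext; simpa using hj
    
      simp [hj, hje]
    · have hne : j ≠ (⟨k, hk⟩ : Fin (n+1)) := by
        intro h; apply absurd hj; simp [h]
      rw [if_neg (by omega : ¬ ((j:ℕ) ≤ k)), if_neg (by omega : ¬ ((j:ℕ) < k)), if_neg hne]
      simp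
  rw [Finset.sum_congr rfl (fun j _ => h j), Finset.sum_add_distrib, Finset.sum_ite_eq' Finset.univ,
    if_pos (Finset.mem_univ _), Finset.mul_sum]
  congr 1
  apply Finset.sum_congr rfl
  intro j _
  split <;> simp

lemma core_aux_psucc (q : Fin (n+1) → ℝ) (k : ℕ) (hk : k < n + 1) :
    (∑ j : Fin (n+1), if (j : ℕ) < k + 1 then q j else 0)
      = (∑ j : Fin (n+1), if (j : ℕ) < k then q j else 0) + q ⟨k, hk⟩ := by
  have h := core_aux_key q k hk 1
  simp only [one_pow, one_mul, mul_one] at h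
  rw [← h]
  apply Finset.sum_congr rfl
  intro j _
  have : ((j:ℕ) < k + 1) ↔ ((j:ℕ) ≤ k) := by omega
  simp [this]

end Core

set_option maxHeartbeats 1000000 in
open scoped Classical in
lemma core_lemma (n : ℕ) (hn : 0 < n) (q : Fin (n+1) → ℝ) (hq : ∀ j, 0 ≤ q j)
    (hq1 : ∑ j, q j = 1) (lam δ : ℝ) (hlam : 0 < lam) (hδ : 0 < δ)
    (r : ℕ → ℝ) (hr : ∀ k, 1 ≤ k → k ≤ n → 0 < r k)
    (hpr : ∀ k, 1 ≤ k → k ≤ n → (∑ j : Fin (n+1), if (j:ℕ) < k then q j else 0) ≤ r k)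
    (hδr : ∀ k, 1 ≤ k → k ≤ n → (1+lam)^n ≤ δ * (1 + lam / r k)^k) :
    ∑ v ∈ Finset.univ.filter (fun v : Fin n → Fin (n+1) =>
        ∃ k, 1 ≤ k ∧ k ≤ n ∧ k ≤ (Finset.univ.filter fun i => ((v i : ℕ) < k)).card),
      ∏ i, q (v i) ≤ δ := by
  set p : ℕ → ℝ := fun k => ∑ j : Fin (n+1), if (j:ℕ) < k then q j else 0 with hp
  set N : ℕ → (Fin n → Fin (n+1)) → ℕ :=
    fun k v => (Finset.univ.filter fun i => ((v i : ℕ) < k)).card with hN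
  set τ : (Fin n → Fin (n+1)) → ℕ :=
    fun v => ((Finset.Icc 1 n).filter fun k => k ≤ N k v).sup id with hτ
  set f : ℕ → (Fin n → Fin (n+1)) → ℝ :=
    fun k v => (1 + lam / p (max (τ v) k)) ^ (N (max (τ v) k) v) with hf
  set w : (Fin n → Fin (n+1)) → ℝ := fun v => ∏ i, q (v i) with hw
  have hp_nonneg : ∀ k, 0 ≤ p k := by
    intro k; apply Finset.sum_nonneg; intro j _
    split
    · exact hq j
    · exact le_refl 0
  have hp_mono : ∀ k k', k ≤ k' → p k ≤ p k' := by
    intro k k' hkk; apply Finset.sum_le_sum; intro j _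
    by_cases hj : (j:ℕ) < k
    · rw [if_pos hj, if_pos (by omega)]
    · rw [if_neg hj]; split
      · exact hq j
      · exact le_refl 0
  have hbase_nonneg : ∀ k, (0:ℝ) ≤ 1 + lam / p k := by
    intro k
    have : 0 ≤ lam / p k := div_nonneg hlam.le (hp_nonneg k)
    linarith
  have hw_nonneg : ∀ v, 0 ≤ w v := by
    intro v; exact Finset.prod_nonneg fun i _ => hq (v i)
  have hf_nonneg : ∀ k v, 0 ≤ f k v := by
    intro k v; exact pow_nonneg (hbase_nonneg _) _
  have hτ_le : ∀ v, τ v ≤ n := by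
    intro v
    apply Finset.sup_le
    intro k hk
    simp only [Finset.mem_filter, Finset.mem_Icc] at hk
    exact hk.1.2
  have hτ_ge : ∀ v k, 1 ≤ k → k ≤ n → k ≤ N k v → k ≤ τ v := by
    intro v k h1 h2 h3
    exact Finset.le_sup (f := id) (by simp [Finset.mem_filter, Finset.mem_Icc, h1, h2, h3])
  have hτ_mem : ∀ v, 1 ≤ τ v → (τ v ≤ n ∧ τ v ≤ N (τ v) v) := by
    intro v h1
    have hne : (((Finset.Icc 1 n).filter fun k => k ≤ N k v)).Nonempty := by
      by_contra hc
      rw [Finset.not_nonempty_iff_eq_empty] at hc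
      rw [hτ] at h1
      simp only [hc, Finset.sup_empty] at h1
      exact absurd h1 (by simp)
    obtain ⟨b, hb, hbe⟩ := Finset.exists_mem_eq_sup _ hne id
    simp only [Finset.mem_filter, Finset.mem_Icc, id] at hb hbe
    have hτb : τ v = b := by rw [hτ]; exact hbe
    rw [hτb]
    exact ⟨hb.1.2, hb.2⟩
  have hτ_spec : ∀ v, (∃ k, 1 ≤ k ∧ k ≤ n ∧ k ≤ N k v) →
      1 ≤ τ v ∧ τ v ≤ n ∧ τ v ≤ N (τ v) v := by
    intro v hv
    obtain ⟨k, h1, h2, h3⟩ := hv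
    have h4 : 1 ≤ τ v := le_trans h1 (hτ_ge v k h1 h2 h3)
    obtain ⟨h5, h6⟩ := hτ_mem v h4
    exact ⟨h4, h5, h6⟩
  -- the martingale step
  have step : ∀ k, 1 ≤ k → k < n →
      ∑ v : Fin n → Fin (n+1), w v * f k v ≤ ∑ v : Fin n → Fin (n+1), w v * f (k+1) v := by
    intro k hk1 hkn
    have hkn1 : k < n + 1 := by omega
    set kF : Fin (n+1) := ⟨k, hkn1⟩ with hkF
    set tr : (Fin n → Fin (n+1)) → (Fin n → Fin (n+1)) :=
      fun v i => if (v i : ℕ) ≤ k then kF else v i with htr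
    have htrv : ∀ v i, ((tr v i : ℕ)) = max ((v i : ℕ)) k := by
      intro v i
      by_cases h : (v i : ℕ) ≤ k <;> simp [htr, h, hkF] <;> omega
    have hNtr : ∀ v j, k < j → N j (tr v) = N j v := by
      intro v j hj
      have heq : (Finset.univ.filter fun i => ((tr v i : ℕ) < j))
          = (Finset.univ.filter fun i => ((v i : ℕ) < j)) := by
        apply Finset.filter_congr
        intro i _
        rw [htrv v i]
        first
        | (constructor <;> intro <;> omega)
        | (simp only [eq_iff_iff]; constructor <;> intro <;> omega)
      simp only [hN]
      rw [heq]
    have hτcase : ∀ v, (k+1 ≤ τ v) ↔ (∃ j, k+1 ≤ j ∧ j ≤ n ∧ j ≤ N j (tr v)) := by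
      intro v
      constructor
      · intro h
        obtain ⟨h5, h6⟩ := hτ_mem v (by omega)
        refine ⟨τ v, h, h5, ?_⟩
        rw [hNtr v (τ v) (by omega)]
        exact h6
      · rintro ⟨j, hj1, hj2, hj3⟩
        rw [hNtr v j (by omega)] at hj3
        exact le_trans hj1 (hτ_ge v j (by omega) hj2 hj3)
    have hmaps : ∀ v : Fin n → Fin (n+1), v ∈ Finset.univ → tr v ∈ Finset.univ :=
      fun v _ => Finset.mem_univ _
    rw [← Finset.sum_fiberwise_of_maps_to hmaps (fun v => w v * f k v),
        ← Finset.sum_fiberwise_of_maps_to hmaps (fun v => w v * f (k+1) v)]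
    apply Finset.sum_le_sum
    intro u _
    by_cases hu : ∃ j, k+1 ≤ j ∧ j ≤ n ∧ j ≤ N j u
    · -- on this fiber the process has already stopped: terms are equal
      apply le_of_eq
      apply Finset.sum_congr rfl
      intro v hv
      simp only [Finset.mem_filter] at hv
      have htv : k + 1 ≤ τ v := by
        rw [hτcase v, hv.2]
        exact hu
      have h1 : max (τ v) k = τ v := max_eq_left (by omega)
      have h2 : max (τ v) (k+1) = τ v := max_eq_left (by omega)
      simp only [hf, h1, h2]
    · -- the fiber where the one-step martingale computation happens
      have htv : ∀ v, tr v = u → τ v ≤ k := by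
        intro v hv
        by_contra hc
        push_neg at hc
        exact hu (by rw [← hv]; exact (hτcase v).mp (by omega))
      have hfib : Finset.univ.filter (fun v => tr v = u)
          = Fintype.piFinset (fun i => Finset.univ.filter
              fun j : Fin (n+1) => (if (j:ℕ) ≤ k then kF else j) = u i) := by
        ext v
        simp [Fintype.mem_piFinset, funext_iff, htr]
      have hterm : ∀ (c : ℝ) (m : ℕ) (v : Fin n → Fin (n+1)),
          w v * (1 + c) ^ (N m v)
            = ∏ i, (q (v i) * (1 + c) ^ (if (v i : ℕ) < m then 1 else 0)) := by
        intro c m v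
        rw [hw, hN]
        simp only [Finset.card_filter]
        rw [← Finset.prod_pow_eq_pow_sum, ← Finset.prod_mul_distrib]
      have hfactor_nonneg : ∀ (c : ℝ) (m : ℕ) (x : Fin (n+1)), 0 ≤ c →
          0 ≤ ∑ j ∈ Finset.univ.filter (fun j : Fin (n+1) => (if (j:ℕ) ≤ k then kF else j) = x),
                q j * (1 + c) ^ (if (j:ℕ) < m then 1 else 0) := by
        intro c m x hc
        apply Finset.sum_nonneg
        intro j _
        exact mul_nonneg (hq j) (pow_nonneg (by linarith) _)
      have hfactor_le : ∀ x : Fin (n+1),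
          (∑ j ∈ Finset.univ.filter (fun j : Fin (n+1) => (if (j:ℕ) ≤ k then kF else j) = x),
              q j * (1 + lam / p k) ^ (if (j:ℕ) < k then 1 else 0))
            ≤ ∑ j ∈ Finset.univ.filter (fun j : Fin (n+1) => (if (j:ℕ) ≤ k then kF else j) = x),
              q j * (1 + lam / p (k+1)) ^ (if (j:ℕ) < k+1 then 1 else 0) := by
        intro x
        rcases lt_trichotomy (x : ℕ) k with hx | hx | hx
        · have hemp : Finset.univ.filter (fun j : Fin (n+1) =>
              (if (j:ℕ) ≤ k then kF else j) = x) = ∅ := by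
            apply Finset.filter_eq_empty_iff.mpr
            intro j _
            by_cases hj : (j:ℕ) ≤ k
            · rw [if_pos hj]
              intro hh
              rw [← hh] at hx
              simp [hkF] at hx
            · rw [if_neg hj]
              intro hh
              rw [hh] at hj
              omega
          rw [hemp]
          simp
        · -- x = kF : the main computation
          have hxk : x = kF := by apply Fin.ext; simp [hkF, hx]
          have hfe : Finset.univ.filter (fun j : Fin (n+1) =>
              (if (j:ℕ) ≤ k then kF else j) = x) = Finset.univ.filter (fun j : Fin (n+1) => (j:ℕ) ≤ k) := by
            apply Finset.filter_congr
            intro j _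
            by_cases hj : (j:ℕ) ≤ k
            · simp [hj, hxk]
            · simp only [if_neg hj, hxk]
              constructor
              · intro hh
                rw [hh] at hj
                exact absurd (by simp [hkF] : ((kF:ℕ)) = k) (by omega)
              · intro hh
                exact absurd hh hj
          rw [hfe]
          rw [Finset.sum_filter, Finset.sum_filter]
          have hL : (∑ j : Fin (n+1), if (j:ℕ) ≤ k then
                q j * (1 + lam / p k) ^ (if (j:ℕ) < k then 1 else 0) else 0)
              = (1 + lam / p k) * p k + q kF :=
            core_aux_key q k hkn1 (1 + lam / p k)
          have hR : (∑ j : Fin (n+1), if (j:ℕ) ≤ k then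
                q j * (1 + lam / p (k+1)) ^ (if (j:ℕ) < k+1 then 1 else 0) else 0)
              = (1 + lam / p (k+1)) * p (k+1) := by
            have : ∀ j : Fin (n+1), (if (j:ℕ) ≤ k then
                  q j * (1 + lam / p (k+1)) ^ (if (j:ℕ) < k+1 then 1 else 0) else 0)
                = (1 + lam / p (k+1)) * (if (j:ℕ) < k+1 then q j else 0) := by
              intro j
              by_cases hj : (j:ℕ) ≤ k
              · rw [if_pos hj, if_pos (by omega : (j:ℕ) < k+1), if_pos (by omega : (j:ℕ) < k+1)]
                ring
              · rw [if_neg hj, if_neg (by omega : ¬ ((j:ℕ) < k+1)), mul_zero]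
            rw [Finset.sum_congr rfl (fun j _ => this j), ← Finset.mul_sum]
          rw [hL, hR]
          have hps : p (k+1) = p k + q kF := core_aux_psucc q k hkn1
          by_cases hp0 : p k = 0
          · have hqk : p (k+1) = q kF := by rw [hps, hp0, zero_add]
            have h0 : q kF ≤ (1 + lam / p (k+1)) * p (k+1) := by
              rw [hqk]
              nlinarith [hq kF, mul_nonneg (div_nonneg hlam.le (hq kF)) (hq kF)]
            calc (1 + lam / p k) * p k + q kF = q kF := by rw [hp0]; ring
              _ ≤ (1 + lam / p (k+1)) * p (k+1) := h0
          · have hppos : 0 < p k := lt_of_le_of_ne (hp_nonneg k) (Ne.symm hp0)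
            have hp1pos : 0 < p (k+1) := lt_of_lt_of_le hppos (hp_mono k (k+1) (by omega))
            have e1 : (1 + lam / p k) * p k = p k + lam := by field_simp
            have e2 : (1 + lam / p (k+1)) * p (k+1) = p (k+1) + lam := by field_simp
            rw [e1, e2, hps]
            linarith
        · -- x > k : singleton fiber, equal terms
          have hfe : Finset.univ.filter (fun j : Fin (n+1) =>
              (if (j:ℕ) ≤ k then kF else j) = x) = {x} := by
            ext j
            simp only [Finset.mem_filter, Finset.mem_univ, true_and, Finset.mem_singleton]
            by_cases hj : (j:ℕ) ≤ k
            · rw [if_pos hj]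
              constructor
              · intro hh
                rw [← hh] at hx
                exact absurd (by simp [hkF] : ((kF:ℕ)) = k) (by omega)
              · intro hh
                rw [hh] at hj
                omega
            · rw [if_neg hj]
          rw [hfe, Finset.sum_singleton, Finset.sum_singleton,
            if_neg (by omega : ¬ ((x:ℕ) < k)), if_neg (by omega : ¬ ((x:ℕ) < k+1))]
          simp
      calc ∑ v ∈ Finset.univ.filter (fun v => tr v = u), w v * f k v
          = ∑ v ∈ Finset.univ.filter (fun v => tr v = u),
              ∏ i, (q (v i) * (1 + lam / p k) ^ (if (v i : ℕ) < k then 1 else 0)) := by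
            apply Finset.sum_congr rfl
            intro v hv
            simp only [Finset.mem_filter] at hv
            have h1 : max (τ v) k = k := max_eq_right (htv v hv.2)
            rw [← hterm (lam / p k) k v]
            simp only [hf, h1]
        _ = ∑ v ∈ Fintype.piFinset (fun i => Finset.univ.filter
              fun j : Fin (n+1) => (if (j:ℕ) ≤ k then kF else j) = u i),
              ∏ i, (q (v i) * (1 + lam / p k) ^ (if (v i : ℕ) < k then 1 else 0)) := by
            rw [hfib]
        _ = ∏ i, ∑ j ∈ Finset.univ.filter
              (fun j : Fin (n+1) => (if (j:ℕ) ≤ k then kF else j) = u i),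
              q j * (1 + lam / p k) ^ (if (j:ℕ) < k then 1 else 0) :=
            (Finset.prod_univ_sum
              (fun i : Fin n => Finset.univ.filter
                fun j : Fin (n+1) => (if (j:ℕ) ≤ k then kF else j) = u i)
              (fun _ j => q j * (1 + lam / p k) ^ (if (j:ℕ) < k then 1 else 0))).symm
        _ ≤ ∏ i, ∑ j ∈ Finset.univ.filter
              (fun j : Fin (n+1) => (if (j:ℕ) ≤ k then kF else j) = u i),
              q j * (1 + lam / p (k+1)) ^ (if (j:ℕ) < k+1 then 1 else 0) := by
            apply Finset.prod_le_prod
            · intro i _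
              exact hfactor_nonneg (lam / p k) k (u i) (div_nonneg hlam.le (hp_nonneg k))
            · intro i _
              exact hfactor_le (u i)
        _ = ∑ v ∈ Fintype.piFinset (fun i => Finset.univ.filter
              fun j : Fin (n+1) => (if (j:ℕ) ≤ k then kF else j) = u i),
              ∏ i, (q (v i) * (1 + lam / p (k+1)) ^ (if (v i : ℕ) < k+1 then 1 else 0)) :=
            Finset.prod_univ_sum
              (fun i : Fin n => Finset.univ.filter
                fun j : Fin (n+1) => (if (j:ℕ) ≤ k then kF else j) = u i)
              (fun _ j => q j * (1 + lam / p (k+1)) ^ (if (j:ℕ) < k+1 then 1 else 0))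
        _ = ∑ v ∈ Finset.univ.filter (fun v => tr v = u),
              ∏ i, (q (v i) * (1 + lam / p (k+1)) ^ (if (v i : ℕ) < k+1 then 1 else 0)) := by
            rw [hfib]
        _ = ∑ v ∈ Finset.univ.filter (fun v => tr v = u), w v * f (k+1) v := by
            apply Finset.sum_congr rfl
            intro v hv
            simp only [Finset.mem_filter] at hv
            have h1 : max (τ v) (k+1) = k+1 := max_eq_right (by have := htv v hv.2; omega)
            rw [← hterm (lam / p (k+1)) (k+1) v]
            simp only [hf, h1]
  -- downward induction to reach time n
  have mono : ∀ m k, 1 ≤ k → k + m = n →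
      ∑ v : Fin n → Fin (n+1), w v * f k v ≤ ∑ v : Fin n → Fin (n+1), w v * f n v := by
    intro m
    induction m with
    | zero =>
      intro k hk1 hkn
      have : k = n := by omega
      rw [this]
    | succ m ih =>
      intro k hk1 hkn
      calc ∑ v : Fin n → Fin (n+1), w v * f k v
          ≤ ∑ v : Fin n → Fin (n+1), w v * f (k+1) v := step k hk1 (by omega)
        _ ≤ ∑ v : Fin n → Fin (n+1), w v * f n v := ih (k+1) (by omega) (by omega)
  -- the expectation at time n is (1+lam)^n
  have hend : ∑ v : Fin n → Fin (n+1), w v * f n v ≤ (1+lam)^n := by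
    have hterm : ∀ v : Fin n → Fin (n+1),
        w v * f n v = ∏ i, (q (v i) * (1 + lam / p n) ^ (if ((v i:ℕ)) < n then 1 else 0)) := by
      intro v
      have hmax : max (τ v) n = n := max_eq_right (hτ_le v)
      rw [hf]
      simp only [hmax]
      rw [hw, hN]
      simp only [Finset.card_filter]
      rw [← Finset.prod_pow_eq_pow_sum, ← Finset.prod_mul_distrib]
    rw [Finset.sum_congr rfl fun v _ => hterm v]
    have hswap : ∑ v : Fin n → Fin (n+1),
        ∏ i, (q (v i) * (1 + lam / p n) ^ (if ((v i:ℕ)) < n then 1 else 0))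
        = ∏ _i : Fin n, ∑ j : Fin (n+1),
            q j * (1 + lam / p n) ^ (if (j:ℕ) < n then 1 else 0) := by
      rw [← Fintype.piFinset_univ]
      exact (Finset.prod_univ_sum (fun _i : Fin n => (Finset.univ : Finset (Fin (n+1))))
        (fun _ j => q j * (1 + lam / p n) ^ (if (j:ℕ) < n then 1 else 0))).symm
    rw [hswap]
    have hcol : (∑ j : Fin (n+1), q j * (1 + lam / p n) ^ (if (j:ℕ) < n then 1 else 0))
        ≤ 1 + lam := by
      have h1 : (∑ j : Fin (n+1), q j * (1 + lam / p n) ^ (if (j:ℕ) < n then 1 else 0))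
          = (1 + lam / p n) * p n + q ⟨n, Nat.lt_succ_self n⟩ := by
        rw [← core_aux_key q n (Nat.lt_succ_self n) (1 + lam / p n)]
        apply Finset.sum_congr rfl
        intro j _
        rw [if_pos (by omega : (j:ℕ) ≤ n)]
      have h2 : p n + q ⟨n, Nat.lt_succ_self n⟩ = 1 := by
        rw [hp]
        rw [← core_aux_psucc q n (Nat.lt_succ_self n), ← hq1]
        apply Finset.sum_congr rfl
        intro j _
        rw [if_pos (by omega : (j:ℕ) < n+1)]
      by_cases hp0 : p n = 0
      · rw [h1, hp0]
        rw [hp0] at h2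
        simp only [mul_zero, zero_add]
        linarith
      · have : (lam / p n) * p n = lam := div_mul_cancel₀ lam hp0
        rw [h1]
        nlinarith [hp_nonneg n]
    calc ∏ _i : Fin n, (∑ j : Fin (n+1), q j * (1 + lam / p n) ^ (if (j:ℕ) < n then 1 else 0))
        ≤ ∏ _i : Fin n, (1+lam) := by
          apply Finset.prod_le_prod
          · intro i _
            apply Finset.sum_nonneg
            intro j _
            exact mul_nonneg (hq j) (pow_nonneg (hbase_nonneg n) _)
          · intro i _
            exact hcol
      _ = (1+lam)^n := by rw [Finset.prod_const, Finset.card_univ, Fintype.card_fin]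
  -- crossing bound on the bad set
  set Bad : Finset (Fin n → Fin (n+1)) := Finset.univ.filter (fun v : Fin n → Fin (n+1) => ∃ k, 1 ≤ k ∧ k ≤ n ∧ k ≤ N k v) with hBad
  have hstart : ∀ v ∈ Bad, w v * ((1+lam)^n / δ) ≤ w v * f 1 v := by
    intro v hv
    rw [hBad] at hv
    simp only [Finset.mem_filter] at hv
    obtain ⟨h1, h2, h3⟩ := hτ_spec v hv.2
    by_cases hw0 : w v = 0
    · rw [hw0, zero_mul, zero_mul]
    · apply mul_le_mul_of_nonneg_left _ (hw_nonneg v)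
      have hNpos : 1 ≤ N (τ v) v := le_trans h1 h3
      obtain ⟨i, hi⟩ : ∃ i, ((v i : ℕ) < τ v) := by
        have hne : (Finset.univ.filter fun i => ((v i:ℕ) < τ v)).Nonempty := by
          rw [← Finset.card_pos]
          exact lt_of_lt_of_le Nat.zero_lt_one hNpos
        obtain ⟨i, hi⟩ := hne
        exact ⟨i, (Finset.mem_filter.mp hi).2⟩
      have hqi : 0 < q (v i) := by
        have hne : q (v i) ≠ 0 := by
          intro h0
          exact hw0 (Finset.prod_eq_zero (Finset.mem_univ i) h0)
        exact lt_of_le_of_ne (hq _) (Ne.symm hne)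
      have hppos : 0 < p (τ v) := by
        apply lt_of_lt_of_le hqi
        calc q (v i) = (if ((v i:ℕ)) < τ v then q (v i) else 0) := by rw [if_pos hi]
          _ ≤ ∑ j : Fin (n+1), if (j:ℕ) < τ v then q j else 0 :=
            Finset.single_le_sum (f := fun j : Fin (n+1) => if (j:ℕ) < τ v then q j else 0)
              (fun j _ => by split; exacts [hq j, le_refl 0]) (Finset.mem_univ (v i))
      have hrpos : 0 < r (τ v) := hr (τ v) h1 h2
      have hb1 : 1 + lam / r (τ v) ≤ 1 + lam / p (τ v) := by
        have : lam / r (τ v) ≤ lam / p (τ v) :=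
          div_le_div_of_nonneg_left hlam.le hppos (hpr (τ v) h1 h2)
        linarith
      have hb0 : (0:ℝ) ≤ 1 + lam / r (τ v) := by positivity
      have hmax1 : max (τ v) 1 = τ v := max_eq_left h1
      calc (1+lam)^n / δ ≤ (1 + lam / r (τ v)) ^ (τ v) := by
            rw [div_le_iff₀ hδ]
            calc (1+lam)^n ≤ δ * (1 + lam / r (τ v)) ^ (τ v) := hδr (τ v) h1 h2
              _ = (1 + lam / r (τ v)) ^ (τ v) * δ := mul_comm _ _
        _ ≤ (1 + lam / r (τ v)) ^ (N (τ v) v) := by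
            apply pow_le_pow_right₀ _ h3
            have : 0 ≤ lam / r (τ v) := div_nonneg hlam.le hrpos.le
            linarith
        _ ≤ (1 + lam / p (τ v)) ^ (N (τ v) v) := pow_le_pow_left₀ hb0 hb1 _
        _ = f 1 v := by rw [hf]; simp only [hmax1]
  have sum_bad : (∑ v ∈ Bad, w v) * ((1+lam)^n / δ) ≤ (1+lam)^n := by
    rw [Finset.sum_mul]
    calc ∑ v ∈ Bad, w v * ((1+lam)^n / δ)
        ≤ ∑ v ∈ Bad, w v * f 1 v := Finset.sum_le_sum hstart
      _ ≤ ∑ v : Fin n → Fin (n+1), w v * f 1 v := by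
          rw [hBad]
          exact Finset.sum_le_sum_of_subset_of_nonneg (Finset.filter_subset _ _)
            (fun v _ _ => mul_nonneg (hw_nonneg v) (hf_nonneg 1 v))
      _ ≤ ∑ v : Fin n → Fin (n+1), w v * f n v := mono (n-1) 1 le_rfl (by omega)
      _ ≤ (1+lam)^n := hend
  have hA : (0:ℝ) < (1+lam)^n := pow_pos (by linarith) n
  have h2 := mul_le_mul_of_nonneg_right sum_bad hδ.le
  rw [mul_assoc, div_mul_cancel₀ _ (ne_of_gt hδ)] at h2
  have h3 : (∑ v ∈ Bad, w v) ≤ δ :=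
    le_of_mul_le_mul_right (by linarith [h2]) hA
  show ∑ v ∈ Bad, w v ≤ δ
  exact h3

set_option maxHeartbeats 1000000 in
/-- **Lemma 2**: for all `λ > 0` and `δ ∈ (0,1)`, with `ε(n,δ) = log(1/δ)/n`,
`P( ∀ t ∈ ℝ with F(t) > 0 : F̂_n(t) - F(t) ≤ Δ_{ε(n,δ)}(F(t), λ) ) ≥ 1 - δ`. -/
theorem dkwm_event_lemma
    {Ω : Type*} [MeasureSpace Ω] [IsProbabilityMeasure (ℙ : Measure Ω)]
    (n : ℕ) (hn : 0 < n) (X : Fin n → Ω → ℝ)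
    (hmeas : ∀ i, Measurable (X i))
    (hindep : iIndepFun X ℙ)
    (hident : ∀ i j, IdentDistrib (X i) (X j) ℙ ℙ)
    (F : ℝ → ℝ) (hF : ∀ i t, F t = (ℙ {ω | X i ω ≤ t}).toReal)
    (lam : ℝ) (hlam : 0 < lam) (δ : ℝ) (hδ0 : 0 < δ) (hδ1 : δ < 1) :
    ENNReal.ofReal (1 - δ)
      ≤ ℙ {ω | ∀ t : ℝ, 0 < F t →
            (n : ℝ)⁻¹ * ∑ i, (if X i ω ≤ t then (1 : ℝ) else 0) - F t
              ≤ DeltaEps (Real.log (1 / δ) / n) (F t) lam} := by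
  classical
  set i0 : Fin n := ⟨0, hn⟩ with hi0
  set ε : ℝ := Real.log (1 / δ) / n with hε
  have hnR : (0:ℝ) < n := by exact_mod_cast hn
  have hεpos : 0 < ε := div_pos (Real.log_pos (one_lt_one_div hδ0 hδ1)) hnR
  set c : ℝ := Real.log (1 + lam) + ε with hc
  have hcpos : 0 < c := add_pos (Real.log_pos (by linarith)) hεpos
  set r : ℕ → ℝ := fun k => lam / (Real.exp (n * c / k) - 1) with hrdef
  have hexp_gt : ∀ k : ℕ, 1 ≤ k → 1 < Real.exp (n * c / k) := by
    intro k h1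
    rw [Real.one_lt_exp_iff]
    have : (0:ℝ) < k := by exact_mod_cast h1
    positivity
  have hrpos : ∀ k, 1 ≤ k → k ≤ n → 0 < r k := fun k h1 _ =>
    div_pos hlam (by linarith [hexp_gt k h1])
  have hrmono : ∀ k k', 1 ≤ k → k ≤ k' → r k ≤ r k' := by
    intro k k' h1 h2
    have h1' : 1 ≤ k' := le_trans h1 h2
    have hd' : (0:ℝ) < Real.exp (n * c / k') - 1 := by linarith [hexp_gt k' h1']
    apply div_le_div_of_nonneg_left hlam.le hd'
    have : Real.exp (n * c / k') ≤ Real.exp (n * c / k) := by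
      apply Real.exp_le_exp.mpr
      apply div_le_div_of_nonneg_left (by positivity) (by exact_mod_cast h1) (by exact_mod_cast h2)
    linarith
  have hδr : ∀ k, 1 ≤ k → k ≤ n → (1+lam)^n ≤ δ * (1 + lam / r k)^k := by
    intro k h1 h2
    have hD : 0 < Real.exp (n*c/k) - 1 := by linarith [hexp_gt k h1]
    have hk0 : (k:ℝ) ≠ 0 := by
      have : (0:ℝ) < k := by exact_mod_cast h1
      linarith
    have hbase : 1 + lam / r k = Real.exp (n * c / k) := by
      rw [hrdef]
      field_simp
      ring
    rw [hbase, ← Real.exp_nat_mul]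
    have harg : (k:ℝ) * (n * c / k) = n * c := by field_simp
    rw [harg]
    have hexpc : Real.exp ((n:ℝ) * c) = (1+lam)^n * (1/δ) := by
      rw [hc, mul_add, Real.exp_add, Real.exp_nat_mul, Real.exp_log (by linarith : (0:ℝ) < 1 + lam)]
      congr 1
      rw [hε, mul_div_cancel₀ _ (ne_of_gt hnR), Real.exp_log (by positivity)]
    rw [hexpc]
    rw [mul_comm δ _, mul_assoc, one_div, inv_mul_cancel₀ (ne_of_gt hδ0), mul_one]
  -- the nested lower sets
  set B : ℕ → Set ℝ := fun k => {u : ℝ | 0 < F u ∧ F u < r k} with hB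
  set T : ℕ → Set ℝ := fun k => {x : ℝ | ∃ u ∈ B k, x ≤ u} with hT
  have hFval : ∀ (i : Fin n) (t : ℝ), ℙ {ω | X i ω ≤ t} = ENNReal.ofReal (F t) := by
    intro i t
    rw [hF i t, ENNReal.ofReal_toReal (measure_ne_top _ _)]
  have hμIic : ∀ u : ℝ, (Measure.map (X i0) ℙ) (Set.Iic u) = ENNReal.ofReal (F u) := by
    intro u
    rw [Measure.map_apply (hmeas i0) measurableSet_Iic]
    exact hFval i0 u
  have hTprop : ∀ k, MeasurableSet (T k) ∧
      (Measure.map (X i0) ℙ) (T k) ≤ ENNReal.ofReal (r k) := by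
    intro k
    apply lower_meas
    intro u hu
    rw [hμIic u]
    exact ENNReal.ofReal_le_ofReal (le_of_lt hu.2)
  have hTmono : ∀ k k', 1 ≤ k → k ≤ k' → T k ⊆ T k' := by
    intro k k' h1 h2 x hx
    obtain ⟨u, ⟨hu1, hu2⟩, hxu⟩ := hx
    exact ⟨u, ⟨hu1, lt_of_lt_of_le hu2 (hrmono k k' h1 h2)⟩, hxu⟩
  -- the level function
  set d : ℝ → ℕ := fun x => ((Finset.Icc 1 n).filter (fun k => x ∈ T k)).card with hd
  have hdle : ∀ x, d x ≤ n := by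
    intro x
    calc d x ≤ (Finset.Icc 1 n).card := Finset.card_filter_le _ _
      _ = n := by rw [Nat.card_Icc]; omega
  set L : ℝ → Fin (n+1) := fun x => ⟨n - d x, Nat.lt_succ_of_le (Nat.sub_le n (d x))⟩ with hL
  have hdmeas : Measurable d := by
    have hdeq : d = fun x => ∑ k ∈ Finset.Icc 1 n, if x ∈ T k then 1 else 0 := by
      funext x
      rw [hd]
      exact Finset.card_filter _ _
    rw [hdeq]
    apply Finset.measurable_sum
    intro k _
    exact Measurable.ite (hTprop k).1 measurable_const measurable_const
  have hLmeas : Measurable L := by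
    have : L = (fun m : ℕ => (⟨n - m, Nat.lt_succ_of_le (Nat.sub_le n m)⟩ : Fin (n+1))) ∘ d := rfl
    rw [this]
    exact measurable_from_top.comp hdmeas
  have hLT : ∀ (x : ℝ) (k : ℕ), 1 ≤ k → k ≤ n → (((L x : ℕ)) < k ↔ x ∈ T k) := by
    intro x k h1 h2
    have hLx : (L x : ℕ) = n - d x := rfl
    constructor
    · intro h
      by_contra hx
      have hsub : ((Finset.Icc 1 n).filter (fun j => x ∈ T j)) ⊆ Finset.Icc (k+1) n := by
        intro j hj
        simp only [Finset.mem_filter, Finset.mem_Icc] at hj ⊢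
        refine ⟨?_, hj.1.2⟩
        by_contra hjk
        push_neg at hjk
        exact hx (hTmono j k hj.1.1 (by omega) hj.2)
      have hdx : d x ≤ n - k := by
        calc d x ≤ (Finset.Icc (k+1) n).card := Finset.card_le_card hsub
          _ = n - k := by rw [Nat.card_Icc]; omega
      rw [hLx] at h
      omega
    · intro hx
      have hsub : Finset.Icc k n ⊆ (Finset.Icc 1 n).filter (fun j => x ∈ T j) := by
        intro j hj
        simp only [Finset.mem_Icc] at hj
        simp only [Finset.mem_filter, Finset.mem_Icc]
        exact ⟨⟨by omega, hj.2⟩, hTmono k j h1 hj.1 hx⟩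
      have hdx : n + 1 - k ≤ d x := by
        calc n + 1 - k = (Finset.Icc k n).card := by rw [Nat.card_Icc]
          _ ≤ d x := Finset.card_le_card hsub
      rw [hLx]
      have := hdle x
      omega
  -- the discretised variables
  set Y : Fin n → Ω → Fin (n+1) := fun i => L ∘ X i with hY
  have hYmeas : ∀ i, Measurable (Y i) := fun i => hLmeas.comp (hmeas i)
  have hYindep : iIndepFun Y ℙ :=
    hindep.comp (fun _ => L) (fun _ => hLmeas)
  set q : Fin (n+1) → ℝ := fun j => (ℙ (Y i0 ⁻¹' {j})).toReal with hq
  have hqnonneg : ∀ j, 0 ≤ q j := fun j => ENNReal.toReal_nonneg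
  have hqval : ∀ (i : Fin n) (j : Fin (n+1)), ℙ (Y i ⁻¹' {j}) = ENNReal.ofReal (q j) := by
    intro i j
    have hid : ℙ (Y i ⁻¹' {j}) = ℙ (Y i0 ⁻¹' {j}) :=
      ((hident i i0).comp hLmeas).measure_mem_eq (measurableSet_singleton j)
    rw [hid, hq, ENNReal.ofReal_toReal (measure_ne_top _ _)]
  -- single-variable partition
  have hfiber : ∀ (i : Fin n) (s : Finset (Fin (n+1))),
      ℙ (⋃ j ∈ s, Y i ⁻¹' {j}) = ∑ j ∈ s, ℙ (Y i ⁻¹' {j}) := by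
    intro i s
    apply measure_biUnion_finset
    · intro a _ b _ hab
      apply Set.disjoint_left.mpr
      intro ω ha hb
      simp only [Set.mem_preimage, Set.mem_singleton_iff] at ha hb
      exact hab (ha ▸ hb ▸ rfl)
    · intro j _
      exact hYmeas i (measurableSet_singleton j)
  have hq1 : ∑ j, q j = 1 := by
    have huniv : (⋃ j ∈ (Finset.univ : Finset (Fin (n+1))), Y i0 ⁻¹' {j}) = Set.univ := by
      ext ω
      simp only [Set.mem_iUnion, Set.mem_preimage, Set.mem_singleton_iff, Set.mem_univ, iff_true]
      exact ⟨Y i0 ω, Finset.mem_univ _, rfl⟩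
    have h1 : ∑ j : Fin (n+1), ℙ (Y i0 ⁻¹' {j}) = 1 := by
      rw [← hfiber i0 Finset.univ, huniv, measure_univ]
    rw [← ENNReal.ofReal_eq_one, ENNReal.ofReal_sum_of_nonneg (fun j _ => hqnonneg j)]
    rw [← h1]
    apply Finset.sum_congr rfl
    intro j _
    rw [hqval i0 j]
  have hpr : ∀ k, 1 ≤ k → k ≤ n →
      (∑ j : Fin (n+1), if (j:ℕ) < k then q j else 0) ≤ r k := by
    intro k h1 h2
    have hpre : (⋃ j ∈ Finset.univ.filter (fun j : Fin (n+1) => (j:ℕ) < k), Y i0 ⁻¹' {j})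
        = X i0 ⁻¹' (T k) := by
      ext ω
      simp only [Set.mem_iUnion, Set.mem_preimage, Set.mem_singleton_iff, Finset.mem_filter,
        Finset.mem_univ, true_and]
      constructor
      · rintro ⟨j, hj, hje⟩
        rw [← (hLT (X i0 ω) k h1 h2)]
        have hx : L (X i0 ω) = j := hje
        rw [hx]
        exact hj
      · intro hω
        exact ⟨L (X i0 ω), (hLT (X i0 ω) k h1 h2).mpr hω, rfl⟩
    have hmeasT : ℙ (X i0 ⁻¹' (T k)) ≤ ENNReal.ofReal (r k) := by
      rw [← Measure.map_apply (hmeas i0) (hTprop k).1]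
      exact (hTprop k).2
    have hsum : ∑ j ∈ Finset.univ.filter (fun j : Fin (n+1) => (j:ℕ) < k), ℙ (Y i0 ⁻¹' {j})
        ≤ ENNReal.ofReal (r k) := by
      rw [← hfiber i0 _, hpre]
      exact hmeasT
    have hofreal : ENNReal.ofReal (∑ j : Fin (n+1), if (j:ℕ) < k then q j else 0)
        ≤ ENNReal.ofReal (r k) := by
      rw [ENNReal.ofReal_sum_of_nonneg]
      · calc ∑ j : Fin (n+1), ENNReal.ofReal (if (j:ℕ) < k then q j else 0)
            = ∑ j ∈ Finset.univ.filter (fun j : Fin (n+1) => (j:ℕ) < k), ℙ (Y i0 ⁻¹' {j}) := by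
              rw [Finset.sum_filter]
              apply Finset.sum_congr rfl
              intro j _
              split
              · rw [hqval i0 j]
              · simp
          _ ≤ ENNReal.ofReal (r k) := hsum
      · intro j _
        split
        · exact hqnonneg j
        · exact le_refl 0
    have hrk := hrpos k h1 h2
    have := ENNReal.ofReal_le_ofReal_iff (le_of_lt hrk) |>.mp hofreal
    exact this
  -- the elementary events
  set E : (Fin n → Fin (n+1)) → Set Ω := fun v => ⋂ i, Y i ⁻¹' {v i} with hE
  have hEmeas : ∀ v, MeasurableSet (E v) :=
    fun v => MeasurableSet.iInter (fun i => hYmeas i (measurableSet_singleton _))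
  have hEval : ∀ v, ℙ (E v) = ENNReal.ofReal (∏ i, q (v i)) := by
    intro v
    have h0 : (⋂ i, Y i ⁻¹' {v i}) = ⋂ i ∈ Finset.univ, Y i ⁻¹' {v i} := by
      simp
    have h1 : ℙ (⋂ i ∈ Finset.univ, Y i ⁻¹' {v i}) = ∏ i, ℙ (Y i ⁻¹' {v i}) :=
      hYindep.measure_inter_preimage_eq_mul Finset.univ
        (fun i _ => measurableSet_singleton (v i))
    show ℙ (⋂ i, Y i ⁻¹' {v i}) = ENNReal.ofReal (∏ i, q (v i))
    rw [h0, h1, ENNReal.ofReal_prod_of_nonneg (fun i _ => hqnonneg (v i))]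
    apply Finset.prod_congr rfl
    intro i _
    exact hqval i (v i)
  -- the bad and good sets of level vectors
  set NN : ℕ → (Fin n → Fin (n+1)) → ℕ :=
    fun k v => (Finset.univ.filter fun i => ((v i : ℕ) < k)).card with hNN
  set BadP : (Fin n → Fin (n+1)) → Prop := fun v => ∃ k, 1 ≤ k ∧ k ≤ n ∧ k ≤ NN k v with hBadP
  set Bad : Finset (Fin n → Fin (n+1)) := Finset.univ.filter BadP with hBad
  set Good : Finset (Fin n → Fin (n+1)) := Finset.univ.filter (fun v => ¬ BadP v) with hGood
  have hcore : ∑ v ∈ Bad, ∏ i, q (v i) ≤ δ := by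
    have := core_lemma n hn q hqnonneg hq1 lam δ hlam hδ0 r hrpos hpr hδr
    rw [hBad]
    convert this using 2
  have hdisjE : ∀ a b : Fin n → Fin (n+1), a ≠ b → Disjoint (E a) (E b) := by
    intro a b hab
    apply Set.disjoint_left.mpr
    intro ω ha hb
    apply hab
    funext i
    have h1 : Y i ω = a i := by simpa using Set.mem_iInter.mp ha i
    have h2 : Y i ω = b i := by simpa using Set.mem_iInter.mp hb i
    rw [← h1, h2]
  have hEsum : ∀ s : Finset (Fin n → Fin (n+1)), ℙ (⋃ v ∈ s, E v) = ∑ v ∈ s, ℙ (E v) := by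
    intro s
    exact measure_biUnion_finset (fun a _ b _ hab => hdisjE a b hab) (fun v _ => hEmeas v)
  have hall : ∑ v : Fin n → Fin (n+1), ℙ (E v) = 1 := by
    rw [← hEsum Finset.univ]
    have huniv : (⋃ v ∈ (Finset.univ : Finset (Fin n → Fin (n+1))), E v) = Set.univ := by
      ext ω
      simp only [Set.mem_iUnion, Set.mem_univ, iff_true]
      refine ⟨fun i => Y i ω, Finset.mem_univ _, ?_⟩
      exact Set.mem_iInter.mpr (fun i => rfl)
    rw [huniv, measure_univ]
  have hBadBound : ∑ v ∈ Bad, ℙ (E v) ≤ ENNReal.ofReal δ := by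
    calc ∑ v ∈ Bad, ℙ (E v) = ∑ v ∈ Bad, ENNReal.ofReal (∏ i, q (v i)) :=
        Finset.sum_congr rfl (fun v _ => hEval v)
      _ = ENNReal.ofReal (∑ v ∈ Bad, ∏ i, q (v i)) :=
        (ENNReal.ofReal_sum_of_nonneg (fun v _ => Finset.prod_nonneg fun i _ => hqnonneg _)).symm
      _ ≤ ENNReal.ofReal δ := ENNReal.ofReal_le_ofReal hcore
  have htotal : ∑ v ∈ Good, ℙ (E v) + ∑ v ∈ Bad, ℙ (E v) = 1 := by
    rw [add_comm, hBad, hGood, Finset.sum_filter_add_sum_filter_not]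
    exact hall
  have hGoodLB : ENNReal.ofReal (1 - δ) ≤ ∑ v ∈ Good, ℙ (E v) := by
    have hBne : ∑ v ∈ Bad, ℙ (E v) ≠ ⊤ :=
      (lt_of_le_of_lt hBadBound ENNReal.ofReal_lt_top).ne
    rw [← ENNReal.add_le_add_iff_right hBne, htotal]
    calc ENNReal.ofReal (1-δ) + ∑ v ∈ Bad, ℙ (E v)
        ≤ ENNReal.ofReal (1-δ) + ENNReal.ofReal δ := add_le_add le_rfl hBadBound
      _ = ENNReal.ofReal 1 := by
          rw [← ENNReal.ofReal_add (by linarith) hδ0.le]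
          norm_num
      _ = 1 := ENNReal.ofReal_one
  have hsubset : (⋃ v ∈ Good, E v) ⊆ {ω | ∀ t : ℝ, 0 < F t →
      (n : ℝ)⁻¹ * ∑ i, (if X i ω ≤ t then (1 : ℝ) else 0) - F t
        ≤ DeltaEps ε (F t) lam} := by
    intro ω hω
    simp only [Set.mem_iUnion] at hω
    obtain ⟨v, hv, hωv⟩ := hω
    rw [hGood, Finset.mem_filter] at hv
    have hYω : ∀ i, Y i ω = v i := by
      intro i
      simpa using Set.mem_iInter.mp hωv i
    simp only [Set.mem_setOf_eq]
    intro t hFt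
    by_contra hcon
    push_neg at hcon
    set S : ℕ := (Finset.univ.filter (fun i => X i ω ≤ t)).card with hS
    have hsumS : ∑ i, (if X i ω ≤ t then (1:ℝ) else 0) = S := by
      rw [Finset.sum_boole, hS]
    have hlamF : 0 < lam / F t := div_pos hlam hFt
    have hLL : 0 < Real.log (1 + lam / F t) := Real.log_pos (by linarith)
    have hDel : DeltaEps ε (F t) lam = c / Real.log (1 + lam / F t) - F t := by
      rw [DeltaEps, hc]
    rw [hDel, hsumS] at hcon
    have h2 : c / Real.log (1 + lam / F t) < (n:ℝ)⁻¹ * S := by linarith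
    rw [div_lt_iff₀ hLL] at h2
    have hSpos : 1 ≤ S := by
      by_contra hS0
      push_neg at hS0
      have hS00 : S = 0 := by omega
      rw [hS00] at h2
      norm_num at h2
      linarith
    have hSn : S ≤ n := by
      calc S ≤ (Finset.univ : Finset (Fin n)).card := Finset.card_filter_le _ _
        _ = n := by simp
    have hSR : (0:ℝ) < S := by exact_mod_cast hSpos
    have h4 : (n:ℝ) * c < Real.log (1 + lam / F t) * S := by
      have h5 := mul_lt_mul_of_pos_left h2 hnR
      have h6 : (n:ℝ) * ((n:ℝ)⁻¹ * S * Real.log (1 + lam / F t))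
          = Real.log (1 + lam / F t) * S := by
        field_simp
      rw [h6] at h5
      exact h5
    have h7 : (n:ℝ) * c / S < Real.log (1 + lam / F t) := by
      rw [div_lt_iff₀ hSR]
      exact h4
    have h8 : Real.exp ((n:ℝ) * c / S) < 1 + lam / F t :=
      (Real.lt_log_iff_exp_lt (by positivity)).mp h7
    have hDS : 0 < Real.exp ((n:ℝ)*c/(S:ℝ)) - 1 := by linarith [hexp_gt S hSpos]
    have h9 : F t < r S := by
      rw [hrdef]
      show F t < lam / (Real.exp ((n:ℝ) * c / (S:ℝ)) - 1)
      rw [lt_div_iff₀ hDS]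
      have h10 : Real.exp ((n:ℝ)*c/(S:ℝ)) - 1 < lam / F t := by linarith
      have h11 := (lt_div_iff₀ hFt).mp h10
      linarith [h11, mul_comm (F t) (Real.exp ((n:ℝ)*c/(S:ℝ)) - 1)]
    have hmem : ∀ i, X i ω ≤ t → ((v i : ℕ) < S) := by
      intro i hi
      rw [← hYω i]
      show ((L (X i ω) : ℕ)) < S
      rw [hLT (X i ω) S hSpos hSn]
      exact ⟨t, ⟨hFt, h9⟩, hi⟩
    have hcount : S ≤ NN S v := by
      rw [hNN]
      apply Finset.card_le_card
      intro i hi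
      simp only [Finset.mem_filter, Finset.mem_univ, true_and] at hi ⊢
      exact hmem i hi
    exact hv.2 ⟨S, hSpos, hSn, hcount⟩
  calc ENNReal.ofReal (1 - δ) ≤ ∑ v ∈ Good, ℙ (E v) := hGoodLB
    _ = ℙ (⋃ v ∈ Good, E v) := (hEsum Good).symm
    _ ≤ ℙ {ω | ∀ t : ℝ, 0 < F t →
          (n : ℝ)⁻¹ * ∑ i, (if X i ω ≤ t then (1 : ℝ) else 0) - F t
            ≤ DeltaEps ε (F t) lam} := measure_mono hsubset
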